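/- Let λ(G) be a temporal graph, where G = (V,E) is a digraph, and let s, v ∈ V be two distinguished vertices. Then the maximum number of pairwise time-edge disjoint journeys from s to v in λ(G) is equal to the minimum number of time-edges whose removal leaves no journey from s to v. -/

import Mathlib

/-- A journey (time-respecting path) in a temporal digraph with edge relation `E`
and labeling `lab`, from `s` to `v`: a walk along edges of the digraph together
with a strictly increasing sequence of labels, each chosen from the label set of
the corresponding edge. -/
structure Journey {V : Type*} (E : V → V → Prop) (lab : V → V → Finset ℕ)
    (s v : V) where
  len : ℕ
  vert : Fin (len + 1) → V
  lbl : Fin len → ℕ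
  first : vert 0 = s
  last : vert (Fin.last len) = v
  edge : ∀ i : Fin len, E (vert i.castSucc) (vert i.succ)
  mem : ∀ i : Fin len, lbl i ∈ lab (vert i.castSucc) (vert i.succ)
  mono : StrictMono lbl

/-- Two journeys are time-edge disjoint if no time-edge `(e, t)` is used by both. -/
def TimeEdgeDisjoint {V : Type*} {E : V → V → Prop} {lab : V → V → Finset ℕ}
    {s₁ v₁ s₂ v₂ : V} (J : Journey E lab s₁ v₁) (J' : Journey E lab s₂ v₂) : Prop :=
  ∀ (i : Fin J.len) (j : Fin J'.len),
    J.vert i.castSucc = J'.vert j.castSucc → J.vert i.succ = J'.vert j.succ →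
      J.lbl i ≠ J'.lbl j

/-- The labeling obtained by removing the time-edges in `D`:
for `(u, w, t) ∈ D`, the label `t` is deleted from the label set of the edge `(u, w)`. -/
def removeTimeEdges {V : Type*} [DecidableEq V] (lab : V → V → Finset ℕ)
    (D : Finset (V × V × ℕ)) : V → V → Finset ℕ :=
  fun u w => (lab u w).filter (fun t => (u, w, t) ∉ D)

namespace TMenger
open Finset

set_option linter.unusedSectionVars false

variable {V : Type*} [Fintype V] [DecidableEq V]

/-- A strict upper bound for all time labels. -/
def Tb (lab : V → V → Finset ℕ) : ℕ :=
  (Finset.univ.sup fun p : V × V => (lab p.1 p.2).sup id) + 1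

lemma lt_Tb {lab : V → V → Finset ℕ} {x y : V} {t : ℕ} (h : t ∈ lab x y) : t < Tb lab := by
  have h1 : t ≤ (lab x y).sup id := Finset.le_sup (f := id) h
  have h2 : (lab x y).sup id ≤ Finset.univ.sup fun p : V × V => (lab p.1 p.2).sup id :=
    Finset.le_sup (f := fun p : V × V => (lab p.1 p.2).sup id) (Finset.mem_univ (x, y))
  unfold Tb; omega

/-- A flow in the time-expanded graph. -/
structure Flo (V : Type*) where
  f : V → V → ℕ → ℕ
  w : V → ℕ → ℕ

variable (E : V → V → Prop) (lab : V → V → Finset ℕ) (s v : V)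

def Out (g : Flo V) (x : V) (τ : ℕ) : ℕ := g.w x τ + ∑ y, g.f x y τ

def Inn (g : Flo V) (x : V) : ℕ → ℕ
  | 0 => 0
  | (σ+1) => g.w x σ + ∑ y, g.f y x σ

def Caps (g : Flo V) : Prop := ∀ x y t, g.f x y t ≤ 1
def Supp (g : Flo V) : Prop := ∀ x y t, g.f x y t ≠ 0 → E x y ∧ t ∈ lab x y
def Vabs (g : Flo V) : Prop := (∀ y t, g.f v y t = 0) ∧ (∀ t, g.w v t = 0)
def Wbd (g : Flo V) : Prop := ∀ x t, Tb lab ≤ t → g.w x t = 0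
def Axioms (g : Flo V) : Prop := Caps g ∧ Supp E lab g ∧ Vabs v g ∧ Wbd lab g
def ConsK (g : Flo V) (n : ℕ) : Prop :=
  ∀ x τ, x ≠ v → Out g x τ = Inn g x τ + (if (x, τ) = (s, 0) then n else 0)
def IsFlow (g : Flo V) (n : ℕ) : Prop := Axioms E lab v g ∧ ConsK s v g n

/-- chain condition on consecutive time-edges of a journey -/
def ChTE : (V × V × ℕ) → (V × V × ℕ) → Prop := fun e e' => e.2.1 = e'.1 ∧ e.2.2 < e'.2.2

/-- a list of time-edges forming a journey from s to v -/
def GoodL (l : List (V × V × ℕ)) : Prop :=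
  l ≠ [] ∧ List.Chain' (ChTE) l ∧ (∀ e ∈ l.head?, e.1 = s) ∧
    (∀ e ∈ l.getLast?, e.2.1 = v) ∧ (∀ a ∈ l, E a.1 a.2.1 ∧ a.2.2 ∈ lab a.1 a.2.1)

def vrt (l : List (V × V × ℕ)) : Fin (l.length + 1) → V :=
  fun k => if h : (k : ℕ) < l.length then (l.get ⟨k, h⟩).1 else v

lemma vrt_castSucc (l : List (V × V × ℕ)) (i : Fin l.length) :
    vrt v l i.castSucc = (l.get i).1 := by
  have h : ((i.castSucc : Fin (l.length+1)) : ℕ) < l.length := by simp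
  rw [vrt, dif_pos h]
  have heq : (⟨((i.castSucc : Fin (l.length+1)) : ℕ), h⟩ : Fin l.length) = i :=
    Fin.ext (by simp)
  rw [heq]

lemma vrt_succ (l : List (V × V × ℕ)) (hc : List.Chain' (ChTE) l)
    (hlast : ∀ e ∈ l.getLast?, e.2.1 = v) (i : Fin l.length) :
    vrt v l i.succ = (l.get i).2.1 := by
  have hi : (i : ℕ) < l.length := i.2
  have hval : ((i.succ : Fin (l.length+1)) : ℕ) = (i : ℕ) + 1 := rfl
  by_cases h : (i : ℕ) + 1 < l.length
  · rw [vrt]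
    rw [dif_pos (by omega : ((i.succ : Fin (l.length+1)) : ℕ) < l.length)]
    have h2 := (List.isChain_iff_getElem.1 hc) i (by omega)
    have h1 := h2.1
    have heq : (⟨((i.succ : Fin (l.length+1)) : ℕ), by omega⟩ : Fin l.length)
        = ⟨(i : ℕ) + 1, by omega⟩ := by
      apply Fin.ext; simp [hval]
    rw [heq]
    have heq2 : (⟨(i : ℕ), by omega⟩ : Fin l.length) = i := by apply Fin.ext; rfl
    simp only [List.get_eq_getElem]
    exact h1.symm
  · have hlen : (i : ℕ) + 1 = l.length := by omega
    rw [vrt, dif_neg (by omega)]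
    have hne : l ≠ [] := by
      intro h'; subst h'; simp at hi
    have hsome : l.getLast? = some (l.getLast hne) := List.getLast?_eq_getLast hne
    have hv := hlast _ hsome
    rw [List.getLast_eq_getElem, ← List.get_eq_getElem (l := l) (i := ⟨l.length - 1, by omega⟩)] at hv
    have heq3 : (⟨l.length - 1, by omega⟩ : Fin l.length) = i := by
      apply Fin.ext; simp; omega
    rw [heq3] at hv
    exact hv.symm

lemma lbl_strictMono (l : List (V × V × ℕ)) (hc : List.Chain' (ChTE) l) :
    StrictMono (fun i : Fin l.length => (l.get i).2.2) := by
  have step : ∀ (k : ℕ) (hk : k + 1 < l.length),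
      (l.get ⟨k, by omega⟩).2.2 < (l.get ⟨k+1, hk⟩).2.2 := by
    intro k hk
    simpa only [List.get_eq_getElem] using ((List.isChain_iff_getElem.1 hc) k (by omega)).2
  have gen : ∀ b a (hab : a < b) (hb : b < l.length),
      (l.get ⟨a, by omega⟩).2.2 < (l.get ⟨b, hb⟩).2.2 := by
    intro b
    induction b with
    | zero => intro a ha hb; exact absurd ha (Nat.not_lt_zero a)
    | succ b ih =>
      intro a ha hb
      rcases Nat.lt_succ_iff_lt_or_eq.1 ha with h | h
      · exact (ih a h (by omega)).trans (step b hb)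
      · subst h; exact step a hb
  intro i j hij
  have := gen (j : ℕ) (i : ℕ) hij j.2
  simpa using this

def toJourney (l : List (V × V × ℕ)) (hl : GoodL E lab s v l) : Journey E lab s v where
  len := l.length
  vert := vrt v l
  lbl := fun i => (l.get i).2.2
  first := by
    obtain ⟨hne, _, hh, _, _⟩ := hl
    have h0 : 0 < l.length := List.length_pos_iff.2 hne
    rw [vrt, dif_pos (by simpa using h0 : ((0 : Fin (l.length+1)) : ℕ) < l.length)]
    apply hh
    simp [List.head?_eq_getElem?, List.getElem?_eq_getElem h0, List.get_eq_getElem]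
  last := by
    rw [vrt, dif_neg (by simp)]
  edge := fun i => by
    obtain ⟨hne, hc, hh, hl', hval⟩ := hl
    rw [vrt_castSucc, vrt_succ v l hc hl']
    exact (hval _ (List.get_mem l i)).1
  mem := fun i => by
    obtain ⟨hne, hc, hh, hl', hval⟩ := hl
    rw [vrt_castSucc, vrt_succ v l hc hl']
    exact (hval _ (List.get_mem l i)).2
  mono := lbl_strictMono l hl.2.1

lemma toJourney_triple (l : List (V × V × ℕ)) (hl : GoodL E lab s v l)
    (i : Fin (toJourney E lab s v l hl).len) :
    ((toJourney E lab s v l hl).vert i.castSucc, (toJourney E lab s v l hl).vert i.succ,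
      (toJourney E lab s v l hl).lbl i) = l.get i := by
  obtain ⟨hne, hc, hh, hl', hval⟩ := id hl
  show (vrt v l i.castSucc, vrt v l i.succ, (l.get i).2.2) = l.get i
  exact Prod.ext (vrt_castSucc v l i) (Prod.ext (vrt_succ v l hc hl' i) rfl)

/-! ### flow modification helpers -/

def bumpW (g : Flo V) (x₀ : V) (τ₀ : ℕ) : Flo V :=
  ⟨g.f, fun x τ => if x = x₀ ∧ τ = τ₀ then g.w x τ + 1 else g.w x τ⟩
def dropW (g : Flo V) (x₀ : V) (τ₀ : ℕ) : Flo V :=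
  ⟨g.f, fun x τ => if x = x₀ ∧ τ = τ₀ then g.w x τ - 1 else g.w x τ⟩
def bumpF (g : Flo V) (x₀ y₀ : V) (τ₀ : ℕ) : Flo V :=
  ⟨fun x y τ => if x = x₀ ∧ y = y₀ ∧ τ = τ₀ then g.f x y τ + 1 else g.f x y τ, g.w⟩
def dropF (g : Flo V) (x₀ y₀ : V) (τ₀ : ℕ) : Flo V :=
  ⟨fun x y τ => if x = x₀ ∧ y = y₀ ∧ τ = τ₀ then g.f x y τ - 1 else g.f x y τ, g.w⟩

lemma pair_eq_iff (z x₀ : V) (σ τ₀ : ℕ) : (z, σ) = (x₀, τ₀) ↔ z = x₀ ∧ σ = τ₀ := by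
  simp [Prod.ext_iff]

lemma ite_pair (z x₀ : V) (σ τ₀ : ℕ) :
    (if (z, σ) = (x₀, τ₀) then (1:ℕ) else 0) = if z = x₀ ∧ σ = τ₀ then 1 else 0 := by
  by_cases h : z = x₀ ∧ σ = τ₀
  · rw [if_pos ((pair_eq_iff z x₀ σ τ₀).2 h), if_pos h]
  · rw [if_neg (fun hc => h ((pair_eq_iff z x₀ σ τ₀).1 hc)), if_neg h]

lemma sum_bump (c : Prop) [Decidable c] (y₀ : V) (F : V → ℕ) :
    ∑ y, (if c ∧ y = y₀ then F y + 1 else F y) = (∑ y, F y) + (if c then 1 else 0) := by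
  by_cases hc : c
  · have hpt : ∀ y, (if c ∧ y = y₀ then F y + 1 else F y) = F y + (if y = y₀ then 1 else 0) := by
      intro y; by_cases hy : y = y₀ <;> simp [hc, hy]
    rw [Finset.sum_congr rfl (fun y _ => hpt y), Finset.sum_add_distrib,
      Finset.sum_ite_eq' Finset.univ y₀ (fun _ => 1)]
    simp [hc]
  · simp [hc]

lemma sum_drop (c : Prop) [Decidable c] (y₀ : V) (F : V → ℕ) (h : c → 1 ≤ F y₀) :
    (∑ y, (if c ∧ y = y₀ then F y - 1 else F y)) + (if c then 1 else 0) = ∑ y, F y := by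
  by_cases hc : c
  · have hpt : ∀ y, (if c ∧ y = y₀ then F y - 1 else F y) + (if y = y₀ then 1 else 0) = F y := by
      intro y; by_cases hy : y = y₀
      · subst hy; have := h hc; simp [hc]; omega
      · simp [hy]
    rw [if_pos hc]
    have hs : ∑ y, ((if c ∧ y = y₀ then F y - 1 else F y) + (if y = y₀ then 1 else 0))
        = ∑ y, F y := Finset.sum_congr rfl (fun y _ => hpt y)
    rw [Finset.sum_add_distrib, Finset.sum_ite_eq' Finset.univ y₀ (fun _ => (1:ℕ))] at hs
    simpa using hs
  · simp [hc]

lemma Out_bumpW (g : Flo V) (x₀ : V) (τ₀ : ℕ) (z : V) (σ : ℕ) :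
    Out (bumpW g x₀ τ₀) z σ = Out g z σ + (if (z, σ) = (x₀, τ₀) then 1 else 0) := by
  simp only [Out, bumpW, ite_pair]
  by_cases h : z = x₀ ∧ σ = τ₀ <;> simp [h] <;> omega

lemma Inn_bumpW (g : Flo V) (x₀ : V) (τ₀ : ℕ) (z : V) (σ : ℕ) :
    Inn (bumpW g x₀ τ₀) z σ = Inn g z σ + (if (z, σ) = (x₀, τ₀ + 1) then 1 else 0) := by
  match σ with
  | 0 => rw [Inn, Inn, if_neg (by simp [Prod.ext_iff])]
  | (σ+1) =>
    simp only [Inn, bumpW, ite_pair]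
    have hcond : (z = x₀ ∧ σ + 1 = τ₀ + 1) ↔ (z = x₀ ∧ σ = τ₀) := by
      constructor <;> exact fun ⟨h1, h2⟩ => ⟨h1, by omega⟩
    rw [if_congr hcond rfl rfl]
    by_cases h : z = x₀ ∧ σ = τ₀ <;> simp [h] <;> omega

lemma Out_dropW (g : Flo V) (x₀ : V) (τ₀ : ℕ) (hw : 1 ≤ g.w x₀ τ₀) (z : V) (σ : ℕ) :
    Out (dropW g x₀ τ₀) z σ + (if (z, σ) = (x₀, τ₀) then 1 else 0) = Out g z σ := by
  simp only [Out, dropW, ite_pair]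
  by_cases h : z = x₀ ∧ σ = τ₀
  · obtain ⟨h1, h2⟩ := h; subst h1; subst h2; simp; omega
  · simp [h]

lemma Inn_dropW (g : Flo V) (x₀ : V) (τ₀ : ℕ) (hw : 1 ≤ g.w x₀ τ₀) (z : V) (σ : ℕ) :
    Inn (dropW g x₀ τ₀) z σ + (if (z, σ) = (x₀, τ₀ + 1) then 1 else 0) = Inn g z σ := by
  match σ with
  | 0 => rw [Inn, Inn, if_neg (by simp [Prod.ext_iff])]
  | (σ+1) =>
    simp only [Inn, dropW, ite_pair]
    have hcond : (z = x₀ ∧ σ + 1 = τ₀ + 1) ↔ (z = x₀ ∧ σ = τ₀) := by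
      constructor <;> exact fun ⟨h1, h2⟩ => ⟨h1, by omega⟩
    rw [if_congr hcond rfl rfl]
    by_cases h : z = x₀ ∧ σ = τ₀
    · obtain ⟨h1, h2⟩ := h; subst h1; subst h2; simp; omega
    · simp [h]

lemma Out_bumpF (g : Flo V) (x₀ y₀ : V) (τ₀ : ℕ) (z : V) (σ : ℕ) :
    Out (bumpF g x₀ y₀ τ₀) z σ = Out g z σ + (if (z, σ) = (x₀, τ₀) then 1 else 0) := by
  simp only [Out, bumpF, ite_pair]
  have hcond : ∀ y : V, (z = x₀ ∧ y = y₀ ∧ σ = τ₀) ↔ ((z = x₀ ∧ σ = τ₀) ∧ y = y₀) := by tauto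
  simp only [hcond]
  rw [sum_bump (z = x₀ ∧ σ = τ₀) y₀ (fun y => g.f z y σ)]
  omega

lemma Inn_bumpF (g : Flo V) (x₀ y₀ : V) (τ₀ : ℕ) (z : V) (σ : ℕ) :
    Inn (bumpF g x₀ y₀ τ₀) z σ = Inn g z σ + (if (z, σ) = (y₀, τ₀ + 1) then 1 else 0) := by
  match σ with
  | 0 => rw [Inn, Inn, if_neg (by simp [Prod.ext_iff])]
  | (σ+1) =>
    simp only [Inn, bumpF, ite_pair]
    have hcond : ∀ y : V, (y = x₀ ∧ z = y₀ ∧ σ = τ₀) ↔ ((z = y₀ ∧ σ = τ₀) ∧ y = x₀) := by tauto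
    simp only [hcond]
    rw [sum_bump (z = y₀ ∧ σ = τ₀) x₀ (fun y => g.f y z σ)]
    have hcond2 : (z = y₀ ∧ σ + 1 = τ₀ + 1) ↔ (z = y₀ ∧ σ = τ₀) := by
      constructor <;> exact fun ⟨h1, h2⟩ => ⟨h1, by omega⟩
    rw [if_congr hcond2 rfl rfl]
    omega

lemma Out_dropF (g : Flo V) (x₀ y₀ : V) (τ₀ : ℕ) (hf : 1 ≤ g.f x₀ y₀ τ₀) (z : V) (σ : ℕ) :
    Out (dropF g x₀ y₀ τ₀) z σ + (if (z, σ) = (x₀, τ₀) then 1 else 0) = Out g z σ := by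
  simp only [Out, dropF, ite_pair]
  have hcond : ∀ y : V, (z = x₀ ∧ y = y₀ ∧ σ = τ₀) ↔ ((z = x₀ ∧ σ = τ₀) ∧ y = y₀) := by tauto
  simp only [hcond]
  have this' : (∑ y, (if (z = x₀ ∧ σ = τ₀) ∧ y = y₀ then g.f z y σ - 1 else g.f z y σ))
      + (if (z = x₀ ∧ σ = τ₀) then 1 else 0) = ∑ y, g.f z y σ :=
    sum_drop (z = x₀ ∧ σ = τ₀) y₀ (fun y => g.f z y σ)
      (fun hc => by rw [hc.1, hc.2]; exact hf)
  omega

lemma Inn_dropF (g : Flo V) (x₀ y₀ : V) (τ₀ : ℕ) (hf : 1 ≤ g.f x₀ y₀ τ₀) (z : V) (σ : ℕ) :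
    Inn (dropF g x₀ y₀ τ₀) z σ + (if (z, σ) = (y₀, τ₀ + 1) then 1 else 0) = Inn g z σ := by
  match σ with
  | 0 => rw [Inn, Inn, if_neg (by simp [Prod.ext_iff])]
  | (σ+1) =>
    simp only [Inn, dropF, ite_pair]
    have hcond : ∀ y : V, (y = x₀ ∧ z = y₀ ∧ σ = τ₀) ↔ ((z = y₀ ∧ σ = τ₀) ∧ y = x₀) := by tauto
    simp only [hcond]
    have hcond2 : (z = y₀ ∧ σ + 1 = τ₀ + 1) ↔ (z = y₀ ∧ σ = τ₀) := by
      constructor <;> exact fun ⟨h1, h2⟩ => ⟨h1, by omega⟩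
    rw [if_congr hcond2 rfl rfl]
    have this' : (∑ y, (if (z = y₀ ∧ σ = τ₀) ∧ y = x₀ then g.f y z σ - 1 else g.f y z σ))
        + (if (z = y₀ ∧ σ = τ₀) then 1 else 0) = ∑ y, g.f y z σ :=
      sum_drop (z = y₀ ∧ σ = τ₀) x₀ (fun y => g.f y z σ)
        (fun hc => by rw [hc.1, hc.2]; exact hf)
    omega

/-! ### expanded graph vertices and arcs -/

def allU (lab : V → V → Finset ℕ) : Finset (V × ℕ) :=
  Finset.univ ×ˢ Finset.range (Tb lab + 1)

def garc (g : Flo V) (u u' : V × ℕ) : ℕ :=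
  if u'.2 = u.2 + 1 then g.f u.1 u'.1 u.2 + (if u'.1 = u.1 then g.w u.1 u.2 else 0) else 0

lemma Out_zero_at_T (g : Flo V) (hs : Supp E lab g) (hw : Wbd lab g) (x : V) (τ : ℕ)
    (hτ : Tb lab ≤ τ) : Out g x τ = 0 := by
  rw [Out, hw x τ hτ]
  simp only [zero_add]
  apply Finset.sum_eq_zero
  intro y _
  by_contra h
  exact absurd (lt_Tb (hs x y τ h).2) (by omega)

lemma Out_eq_sum (g : Flo V) (hs : Supp E lab g) (hw : Wbd lab g) (x : V) (τ : ℕ)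
    (hτ : τ < Tb lab + 1) : Out g x τ = ∑ u' ∈ allU lab, garc g (x, τ) u' := by
  rw [allU, Finset.sum_product]
  simp only [garc]
  rw [Finset.sum_congr rfl (fun y _ => Finset.sum_ite_eq' (Finset.range (Tb lab + 1)) (τ+1)
    (fun _ => g.f x y τ + if y = x then g.w x τ else 0))]
  by_cases hT : τ + 1 ∈ Finset.range (Tb lab + 1)
  · simp only [if_pos hT]
    rw [Finset.sum_add_distrib, Finset.sum_ite_eq' Finset.univ x (fun _ => g.w x τ)]
    simp [Out]; omega
  · simp only [if_neg hT]
    have : Tb lab ≤ τ := by simp [Finset.mem_range] at hT; omega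
    simp [Out_zero_at_T E lab g hs hw x τ this]

lemma Inn_eq_sum (g : Flo V) (x : V) (τ : ℕ) (hτ : τ < Tb lab + 1) :
    Inn g x τ = ∑ u ∈ allU lab, garc g u (x, τ) := by
  rw [allU, Finset.sum_product]
  simp only [garc]
  match τ with
  | 0 => simp [Inn]
  | (σ+1) =>
    have hcond : ∀ τ'' : ℕ, (σ + 1 = τ'' + 1) ↔ (τ'' = σ) := by omega
    simp only [hcond]
    rw [Finset.sum_congr rfl (fun y _ => Finset.sum_ite_eq' (Finset.range (Tb lab + 1)) σ
      (fun t => g.f y x t + if x = y then g.w y t else 0))]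
    have hσ : σ ∈ Finset.range (Tb lab + 1) := by simp [Finset.mem_range]; omega
    simp only [if_pos hσ]
    rw [Finset.sum_add_distrib, Finset.sum_ite_eq Finset.univ x (fun y => g.w y σ)]
    simp [Inn]; omega

lemma cross (g : Flo V) (n : ℕ) (hax : Axioms E lab v g) (hc : ConsK s v g n)
    (P : V × ℕ → Prop) [DecidablePred P] (hP : P (s, 0)) (hv : ∀ τ, ¬ P (v, τ)) :
    ∑ p ∈ ((allU lab).filter P) ×ˢ ((allU lab).filter fun u => ¬ P u), garc g p.1 p.2
      = (∑ p ∈ ((allU lab).filter fun u => ¬ P u) ×ˢ ((allU lab).filter P),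
          garc g p.1 p.2) + n := by
  classical
  obtain ⟨hcap, hsp, hva, hwb⟩ := hax
  set A := (allU lab).filter P with hA
  set B := (allU lab).filter (fun u => ¬ P u) with hB
  have hmemA : ∀ u ∈ A, u ∈ allU lab ∧ P u := by
    intro u hu; rw [hA, Finset.mem_filter] at hu; exact hu
  have hAne : ∀ u ∈ A, u.1 ≠ v := by
    intro u hu h
    exact hv u.2 (by rw [← h]; exact (hmemA u hu).2)
  have htime : ∀ u ∈ allU lab, u.2 < Tb lab + 1 := by
    intro u hu
    rw [allU, Finset.mem_product, Finset.mem_range] at hu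
    exact hu.2
  have h1 : ∑ u ∈ A, Out g u.1 u.2 = (∑ u ∈ A, Inn g u.1 u.2) + n := by
    have hcons : ∀ u ∈ A, Out g u.1 u.2 = Inn g u.1 u.2 + (if u = (s,0) then n else 0) := by
      intro u hu
      have := hc u.1 u.2 (hAne u hu)
      simpa using this
    rw [Finset.sum_congr rfl hcons, Finset.sum_add_distrib]
    congr 1
    rw [Finset.sum_ite_eq' A (s,0) (fun _ => n)]
    rw [if_pos]
    rw [hA, Finset.mem_filter]
    constructor
    · rw [allU, Finset.mem_product]; simp
    · exact hP
  have hOut : ∀ u ∈ A, Out g u.1 u.2 = (∑ u' ∈ A, garc g u u') + ∑ u' ∈ B, garc g u u' := by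
    intro u hu
    rw [Out_eq_sum E lab g hsp hwb u.1 u.2 (htime u (hmemA u hu).1)]
    rw [← Finset.sum_filter_add_sum_filter_not (allU lab) P (fun u' => garc g (u.1, u.2) u')]
  have hInn : ∀ u' ∈ A, Inn g u'.1 u'.2 = (∑ u ∈ A, garc g u u') + ∑ u ∈ B, garc g u u' := by
    intro u' hu'
    rw [Inn_eq_sum lab g u'.1 u'.2 (htime u' (hmemA u' hu').1)]
    rw [← Finset.sum_filter_add_sum_filter_not (allU lab) P (fun u => garc g u (u'.1, u'.2))]
  rw [Finset.sum_congr rfl hOut, Finset.sum_congr rfl hInn] at h1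
  rw [Finset.sum_add_distrib, Finset.sum_add_distrib] at h1
  rw [Finset.sum_comm (s := A) (t := A) (f := fun u u' => garc g u u')] at h1
  have h2 : ∑ u ∈ A, ∑ u' ∈ B, garc g u u'
      = (∑ u' ∈ A, ∑ u ∈ B, garc g u u') + n := by omega
  rw [Finset.sum_product, Finset.sum_product]
  rw [h2, Finset.sum_comm (s := B) (t := A) (f := fun u u' => garc g u u')]

lemma zero_flow : IsFlow E lab s v ⟨fun _ _ _ => 0, fun _ _ => 0⟩ 0 := by
  refine ⟨⟨fun _ _ _ => by simp, fun _ _ _ h => absurd rfl h, ⟨fun _ _ => rfl, fun _ => rfl⟩,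
    fun _ _ _ => rfl⟩, fun x τ _ => ?_⟩
  simp [Out, Inn]
  match τ with
  | 0 => simp [Inn]
  | (σ+1) => simp [Inn]

lemma flow_bound (g : Flo V) (n : ℕ) (h : IsFlow E lab s v g n) (hsv : s ≠ v) :
    n ≤ (allU lab).card * (allU lab).card := by
  classical
  have hcr := cross E lab s v g n h.1 h.2 (fun u => u.1 ≠ v) hsv (fun τ h => h rfl)
  set A := (allU lab).filter (fun u : V × ℕ => u.1 ≠ v) with hA
  set B := (allU lab).filter (fun u : V × ℕ => ¬ u.1 ≠ v) with hB
  have hle : ∑ p ∈ A ×ˢ B, garc g p.1 p.2 ≤ (A ×ˢ B).card • 1 := by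
    apply Finset.sum_le_card_nsmul
    intro p hp
    rw [Finset.mem_product] at hp
    have h1 : p.1.1 ≠ v := (Finset.mem_filter.1 hp.1).2
    have h2 : p.2.1 = v := by
      have := (Finset.mem_filter.1 hp.2).2; tauto
    rw [garc]
    by_cases hc : p.2.2 = p.1.2 + 1
    · rw [if_pos hc, if_neg (show ¬ p.2.1 = p.1.1 from by rw [h2]; exact fun hh => h1 hh.symm)]
      simpa using h.1.1 p.1.1 p.2.1 p.1.2
    · rw [if_neg hc]; exact Nat.zero_le 1
  have hcard : (A ×ˢ B).card ≤ (allU lab).card * (allU lab).card := by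
    rw [Finset.card_product]
    exact Nat.mul_le_mul (Finset.card_filter_le _ _) (Finset.card_filter_le _ _)
  calc n ≤ ∑ p ∈ A ×ˢ B, garc g p.1 p.2 := by omega
    _ ≤ (A ×ˢ B).card • 1 := hle
    _ = (A ×ˢ B).card := by simp
    _ ≤ _ := hcard

/-! ### residual reachability -/

def rstep (g : Flo V) : (V × ℕ) → (V × ℕ) → Prop := fun u u' =>
  (u'.1 = u.1 ∧ u'.2 = u.2 + 1 ∧ u.2 < Tb lab)
  ∨ (u'.1 = u.1 ∧ u.2 = u'.2 + 1 ∧ 1 ≤ g.w u'.1 u'.2)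
  ∨ (u'.2 = u.2 + 1 ∧ E u.1 u'.1 ∧ u.2 ∈ lab u.1 u'.1 ∧ g.f u.1 u'.1 u.2 = 0)
  ∨ (u.2 = u'.2 + 1 ∧ 1 ≤ g.f u'.1 u.1 u'.2)

def RR (g : Flo V) : (V × ℕ) → Prop := Relation.ReflTransGen (rstep E lab g) (s, 0)

lemma RR_le (g : Flo V) : ∀ u, RR E lab s g u → u.2 ≤ Tb lab := by
  intro u h
  induction h with
  | refl => exact Nat.zero_le _
  | tail _ hstep ih =>
    rcases hstep with ⟨_, h2, h3⟩ | ⟨_, h2, _⟩ | ⟨h1, _, h3, _⟩ | ⟨h1, _⟩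
    · omega
    · omega
    · have := lt_Tb h3; omega
    · omega

/-! ### generic list-walk surgery -/

lemma exists_dup_split {α : Type*} [DecidableEq α] :
    ∀ (l : List α), ¬ l.Nodup → ∃ (p q₁ q₂ : List α) (x : α),
      l = p ++ (x :: (q₁ ++ (x :: q₂))) := by
  intro l
  induction l with
  | nil => intro h; exact absurd List.nodup_nil h
  | cons a l ih =>
    intro h
    by_cases ha : a ∈ l
    · obtain ⟨q₁, q₂, rfl⟩ := List.append_of_mem ha
      exact ⟨[], q₁, q₂, a, by simp⟩
    · have hnl : ¬ l.Nodup := fun hn => h (List.nodup_cons.2 ⟨ha, hn⟩)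
      obtain ⟨p, q₁, q₂, x, rfl⟩ := ih hnl
      exact ⟨a :: p, q₁, q₂, x, by simp⟩

lemma chain_shorten {α : Type*} [DecidableEq α] {r : α → α → Prop}
    (l : List α) (a : α) (hch : List.Chain r a l) (hnd : ¬ (a :: l).Nodup) :
    ∃ l', List.Chain r a l' ∧ l'.length < l.length ∧
      (a :: l').getLast? = (a :: l).getLast? ∧ ∀ x ∈ l', x ∈ l := by
  obtain ⟨p, q₁, q₂, x, hsplit⟩ := exists_dup_split (a :: l) hnd
  match p, hsplit with
  | [], hsplit =>
    rw [List.nil_append] at hsplit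
    obtain ⟨rfl, rfl⟩ : a = x ∧ l = q₁ ++ (x :: q₂) := by
      constructor
      · exact (List.cons.injEq _ _ _ _ ▸ hsplit).1
      · exact (List.cons.injEq _ _ _ _ ▸ hsplit).2
    refine ⟨q₂, ?_, by simp; omega, ?_, ?_⟩
    · exact (List.isChain_cons_split.1 hch).2
    · rw [show a :: (q₁ ++ (a :: q₂)) = (a :: q₁) ++ (a :: q₂) by simp,
        List.getLast?_append_of_ne_nil _ (by simp)]
    · intro y hy; simp [hy]
  | (c :: p), hsplit =>
    obtain ⟨rfl, rfl⟩ : a = c ∧ l = p ++ (x :: (q₁ ++ (x :: q₂))) := by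
      rw [List.cons_append] at hsplit
      constructor
      · exact (List.cons.injEq _ _ _ _ ▸ hsplit).1
      · exact (List.cons.injEq _ _ _ _ ▸ hsplit).2
    have h1 : List.Chain r a (p ++ [x]) ∧ List.Chain r x (q₁ ++ (x :: q₂)) :=
      List.isChain_cons_split.1 hch
    have h2 : List.Chain r x q₂ := (List.isChain_cons_split.1 h1.2).2
    refine ⟨p ++ (x :: q₂), List.isChain_cons_split.2 ⟨h1.1, h2⟩, by simp, ?_, ?_⟩
    · rw [show a :: (p ++ (x :: q₂)) = (a :: p) ++ (x :: q₂) by simp,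
        show a :: (p ++ (x :: (q₁ ++ (x :: q₂)))) = (a :: (p ++ (x :: q₁))) ++ (x :: q₂) by simp,
        List.getLast?_append_of_ne_nil _ (by simp),
        List.getLast?_append_of_ne_nil _ (by simp)]
    · intro y hy
      simp only [List.mem_append, List.mem_cons] at hy ⊢
      tauto

lemma chain_nodup {α : Type*} [DecidableEq α] {r : α → α → Prop} :
    ∀ (n : ℕ) (l : List α) (a : α), l.length ≤ n → List.Chain r a l →
    ∃ l', List.Chain r a l' ∧ (a :: l').Nodup ∧
      (a :: l').getLast? = (a :: l).getLast? ∧ ∀ x ∈ l', x ∈ l := by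
  intro n
  induction n with
  | zero =>
    intro l a hl hch
    have : l = [] := List.length_eq_zero_iff.1 (Nat.le_zero.1 hl)
    subst this
    exact ⟨[], List.Chain.nil, by simp, rfl, by simp⟩
  | succ n ih =>
    intro l a hl hch
    by_cases hnd : (a :: l).Nodup
    · exact ⟨l, hch, hnd, rfl, fun x hx => hx⟩
    · obtain ⟨l₁, h1, h2, h3, h4⟩ := chain_shorten l a hch hnd
      obtain ⟨l', h1', h2', h3', h4'⟩ := ih l₁ a (by omega) h1
      exact ⟨l', h1', h2', h3'.trans h3, fun x hx => h4 x (h4' x hx)⟩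

lemma chain_prefix_first {α : Type*} {r : α → α → Prop} (Q : α → Prop) :
    ∀ (l : List α) (a : α), List.Chain r a l → ¬ Q a →
      (∀ e ∈ (a :: l).getLast?, Q e) →
      ∃ (l' : List α) (b : α), List.Chain r a (l' ++ [b]) ∧ Q b ∧
        (∀ x ∈ l' ++ [b], x ∈ l) ∧ (∀ x ∈ l', ¬ Q x) := by
  intro l
  induction l with
  | nil =>
    intro a _ hQa hlast
    exact absurd (hlast a (by simp)) hQa
  | cons c l ih =>
    intro a hch hQa hlast
    have hac : r a c := (List.chain_cons.1 hch).1
    have hch2 : List.Chain r c l := (List.chain_cons.1 hch).2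
    by_cases hc : Q c
    · exact ⟨[], c, by simp [List.Chain, hac], hc, by simp, by simp⟩
    · obtain ⟨l', b, h1, h2, h3, h4⟩ := ih c hch2 hc
        (by intro e he; exact hlast e (by rwa [List.getLast?_cons_cons]))
      refine ⟨c :: l', b, ?_, h2, ?_, ?_⟩
      · rw [List.cons_append]; exact List.isChain_cons_cons.2 ⟨hac, h1⟩
      · intro x hx
        rcases List.mem_cons.1 hx with rfl | hx'
        · simp
        · simp [h3 x hx']
      · intro x hx
        rcases List.mem_cons.1 hx with rfl | hx'
        · exact hc
        · exact h4 x hx'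

/-! ### augmenting along a residual walk -/

def AugCons (g : Flo V) (K : ℕ) (u : V × ℕ) : Prop :=
  ∀ z σ, z ≠ v → Out g z σ + (if (z, σ) = u then 1 else 0)
      = Inn g z σ + (if (z, σ) = (s, 0) then K else 0)

def CleanOn (g g₀ : Flo V) (m : List (V × ℕ)) : Prop :=
  (∀ x y τ, g.f x y τ ≠ g₀.f x y τ → (x, τ) ∉ m ∧ (y, τ+1) ∉ m) ∧
  (∀ x τ, g.w x τ ≠ g₀.w x τ → (x, τ) ∉ m ∧ (x, τ+1) ∉ m)

lemma augment (g₀ : Flo V) (hax₀ : Axioms E lab v g₀) (K : ℕ) :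
    ∀ (l : List (V × ℕ)) (a : V × ℕ) (g : Flo V),
      List.Chain (rstep E lab g₀) a l → (a :: l).Nodup →
      (∀ u ∈ (a :: l).dropLast, u.1 ≠ v) →
      Axioms E lab v g → AugCons s v g K a → CleanOn g g₀ l →
      ∃ g', Axioms E lab v g' ∧ ∀ e ∈ (a :: l).getLast?, AugCons s v g' K e := by
  intro l
  induction l with
  | nil =>
    intro a g _ _ _ hax haug _
    exact ⟨g, hax, by intro e he; simp at he; rwa [← he]⟩
  | cons b l ih =>
    intro a g hch hnd hdl hax haug hcln
    obtain ⟨hcap, hsp, hva, hwb⟩ := hax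
    have hstep : rstep E lab g₀ a b := (List.chain_cons.1 hch).1
    have hch' : List.Chain (rstep E lab g₀) b l := (List.chain_cons.1 hch).2
    have hdl2 : (a :: b :: l).dropLast = a :: (b :: l).dropLast := by
      rw [List.dropLast_cons₂]
    have hav : a.1 ≠ v := hdl a (by rw [hdl2]; exact List.mem_cons_self)
    have hal : a ∉ b :: l := (List.nodup_cons.1 hnd).1
    have hnd' : (b :: l).Nodup := (List.nodup_cons.1 hnd).2
    have hbl : b ∉ l := (List.nodup_cons.1 hnd').1
    have hdl' : ∀ u ∈ (b :: l).dropLast, u.1 ≠ v := by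
      intro u hu
      exact hdl u (by rw [hdl2]; exact List.mem_cons_of_mem _ hu)
    have hglast : (a :: b :: l).getLast? = (b :: l).getLast? := List.getLast?_cons_cons
    rw [hglast]
    -- case analysis on the step
    rcases hstep with ⟨h1, h2, h3⟩ | ⟨h1, h2, h3⟩ | ⟨h1, h2, h3, h4⟩ | ⟨h1, h2⟩
    ·
      have hbeq : (a.1, a.2 + 1) = b := by rw [← h1, ← h2]
      refine ih b (bumpW g a.1 a.2) hch' hnd' hdl' ⟨hcap, hsp, ?_, ?_⟩ ?_ ?_
      · exact ⟨hva.1, fun t => by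
          show (if v = a.1 ∧ t = a.2 then g.w v t + 1 else g.w v t) = 0
          rw [if_neg (fun hc => hav hc.1.symm)]; exact hva.2 t⟩
      · intro x t ht
        show (if x = a.1 ∧ t = a.2 then g.w x t + 1 else g.w x t) = 0
        rw [if_neg (fun hc => by omega)]; exact hwb x t ht
      · intro z σ hz
        rw [Out_bumpW, Inn_bumpW]
        simp only [Prod.mk.eta, hbeq]
        have := haug z σ hz
        omega
      · constructor
        · intro x y τ hne
          have := hcln.1 x y τ hne
          exact ⟨fun hm => this.1 (List.mem_cons_of_mem _ hm),
            fun hm => this.2 (List.mem_cons_of_mem _ hm)⟩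
        · intro x τ hne
          by_cases hxa : x = a.1 ∧ τ = a.2
          · obtain ⟨rfl, rfl⟩ := hxa
            refine ⟨fun hm => hal (List.mem_cons_of_mem _ (by simpa using hm)), ?_⟩
            rw [hbeq]
            exact fun hm => hbl hm
          · have hval : (bumpW g a.1 a.2).w x τ = g.w x τ := if_neg hxa
            rw [hval] at hne
            have := hcln.2 x τ hne
            exact ⟨fun hm => this.1 (List.mem_cons_of_mem _ hm),
              fun hm => this.2 (List.mem_cons_of_mem _ hm)⟩
    · -- rwait : b = (a.1, a.2 - 1), a.2 = b.2+1, g₀.w b.1 b.2 ≥ 1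
      have hbv : b.1 ≠ v := by
        intro hb; rw [hb] at h3
        rw [hax₀.2.2.1.2 b.2] at h3; omega
      have hgw : 1 ≤ g.w b.1 b.2 := by
        by_cases hne : g.w b.1 b.2 = g₀.w b.1 b.2
        · omega
        · have hni := (hcln.2 b.1 b.2 hne).1
          exact absurd ((List.mem_cons_self (a := b) (l := l))) hni
      have haeq : (b.1, b.2 + 1) = a := by rw [h1, ← h2]
      refine ih b (dropW g b.1 b.2) hch' hnd' hdl' ⟨hcap, hsp, ?_, ?_⟩ ?_ ?_
      · exact ⟨hva.1, fun t => by
          show (if v = b.1 ∧ t = b.2 then g.w v t - 1 else g.w v t) = 0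
          rw [if_neg (fun hc => hbv hc.1.symm)]; exact hva.2 t⟩
      · intro x t ht
        show (if x = b.1 ∧ t = b.2 then g.w x t - 1 else g.w x t) = 0
        split_ifs with hc
        · rw [hwb x t ht]
        · exact hwb x t ht
      · intro z σ hz
        have hO := Out_dropW g b.1 b.2 hgw z σ
        have hI := Inn_dropW g b.1 b.2 hgw z σ
        rw [Prod.mk.eta] at hO
        rw [haeq] at hI
        have := haug z σ hz
        omega
      · constructor
        · intro x y τ hne
          have := hcln.1 x y τ hne
          exact ⟨fun hm => this.1 (List.mem_cons_of_mem _ hm),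
            fun hm => this.2 (List.mem_cons_of_mem _ hm)⟩
        · intro x τ hne
          by_cases hxa : x = b.1 ∧ τ = b.2
          · obtain ⟨rfl, rfl⟩ := hxa
            refine ⟨fun hm => hbl (by simpa using hm), ?_⟩
            rw [haeq]
            exact fun hm => hal (List.mem_cons_of_mem _ hm)
          · have hval : (dropW g b.1 b.2).w x τ = g.w x τ := if_neg hxa
            rw [hval] at hne
            have := hcln.2 x τ hne
            exact ⟨fun hm => this.1 (List.mem_cons_of_mem _ hm),
              fun hm => this.2 (List.mem_cons_of_mem _ hm)⟩
    · -- fwd : b.2 = a.2+1, E a.1 b.1, a.2 ∈ lab a.1 b.1, g₀.f a.1 b.1 a.2 = 0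
      have hbeq : (b.1, a.2 + 1) = b := by rw [← h1]
      have hgf : g.f a.1 b.1 a.2 = 0 := by
        by_cases hne : g.f a.1 b.1 a.2 = g₀.f a.1 b.1 a.2
        · rw [hne, h4]
        · exact absurd (by rw [show (b.1, a.2+1) = b from hbeq]; exact (List.mem_cons_self (a := b) (l := l)))
            ((hcln.1 a.1 b.1 a.2 hne).2)
      refine ih b (bumpF g a.1 b.1 a.2) hch' hnd' hdl' ⟨?_, ?_, ⟨?_, hva.2⟩, hwb⟩ ?_ ?_
      · intro x y t
        show (if x = a.1 ∧ y = b.1 ∧ t = a.2 then g.f x y t + 1 else g.f x y t) ≤ 1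
        split_ifs with hc
        · obtain ⟨rfl, rfl, rfl⟩ := hc; rw [hgf]
        · exact hcap x y t
      · intro x y t hne0
        show E x y ∧ t ∈ lab x y
        by_cases hc : x = a.1 ∧ y = b.1 ∧ t = a.2
        · obtain ⟨rfl, rfl, rfl⟩ := hc; exact ⟨h2, h3⟩
        · apply hsp x y t
          intro hz
          apply hne0
          show (if x = a.1 ∧ y = b.1 ∧ t = a.2 then g.f x y t + 1 else g.f x y t) = 0
          rw [if_neg hc]; exact hz
      · intro y t
        show (if v = a.1 ∧ y = b.1 ∧ t = a.2 then g.f v y t + 1 else g.f v y t) = 0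
        rw [if_neg (fun hc => hav hc.1.symm)]; exact hva.1 y t
      · intro z σ hz
        rw [Out_bumpF, Inn_bumpF]
        simp only [Prod.mk.eta, hbeq]
        have := haug z σ hz
        omega
      · constructor
        · intro x y τ hne
          by_cases hc : x = a.1 ∧ y = b.1 ∧ τ = a.2
          · obtain ⟨rfl, rfl, rfl⟩ := hc
            refine ⟨fun hm => hal (List.mem_cons_of_mem _ (by simpa using hm)), ?_⟩
            rw [hbeq]
            exact fun hm => hbl hm
          · have hval : (bumpF g a.1 b.1 a.2).f x y τ = g.f x y τ := if_neg hc
            rw [hval] at hne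
            have := hcln.1 x y τ hne
            exact ⟨fun hm => this.1 (List.mem_cons_of_mem _ hm),
              fun hm => this.2 (List.mem_cons_of_mem _ hm)⟩
        · intro x τ hne
          have := hcln.2 x τ hne
          exact ⟨fun hm => this.1 (List.mem_cons_of_mem _ hm),
            fun hm => this.2 (List.mem_cons_of_mem _ hm)⟩
    · -- bwd : a.2 = b.2+1, g₀.f b.1 a.1 b.2 ≥ 1
      have hbv : b.1 ≠ v := by
        intro hb; rw [hb] at h2
        rw [hax₀.2.2.1.1 a.1 b.2] at h2; omega
      have hgf : 1 ≤ g.f b.1 a.1 b.2 := by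
        by_cases hne : g.f b.1 a.1 b.2 = g₀.f b.1 a.1 b.2
        · omega
        · exact absurd (by simpa using (List.mem_cons_self (a := b) (l := l))) ((hcln.1 b.1 a.1 b.2 hne).1)
      have haeq : (a.1, b.2 + 1) = a := by rw [← h1]
      refine ih b (dropF g b.1 a.1 b.2) hch' hnd' hdl' ⟨?_, ?_, ⟨?_, hva.2⟩, hwb⟩ ?_ ?_
      · intro x y t
        show (if x = b.1 ∧ y = a.1 ∧ t = b.2 then g.f x y t - 1 else g.f x y t) ≤ 1
        split_ifs with hc
        · exact le_trans (Nat.sub_le _ _) (hcap x y t)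
        · exact hcap x y t
      · intro x y t hne0
        apply hsp x y t
        intro hz
        apply hne0
        show (if x = b.1 ∧ y = a.1 ∧ t = b.2 then g.f x y t - 1 else g.f x y t) = 0
        split_ifs with hc
        · rw [hz]
        · exact hz
      · intro y t
        show (if v = b.1 ∧ y = a.1 ∧ t = b.2 then g.f v y t - 1 else g.f v y t) = 0
        rw [if_neg (fun hc => hbv hc.1.symm)]; exact hva.1 y t
      · intro z σ hz
        have hO := Out_dropF g b.1 a.1 b.2 hgf z σ
        have hI := Inn_dropF g b.1 a.1 b.2 hgf z σ
        rw [Prod.mk.eta] at hO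
        rw [haeq] at hI
        have := haug z σ hz
        omega
      · constructor
        · intro x y τ hne
          by_cases hc : x = b.1 ∧ y = a.1 ∧ τ = b.2
          · obtain ⟨rfl, rfl, rfl⟩ := hc
            refine ⟨fun hm => hbl (by simpa using hm), ?_⟩
            rw [haeq]
            exact fun hm => hal (List.mem_cons_of_mem _ hm)
          · have hval : (dropF g b.1 a.1 b.2).f x y τ = g.f x y τ := if_neg hc
            rw [hval] at hne
            have := hcln.1 x y τ hne
            exact ⟨fun hm => this.1 (List.mem_cons_of_mem _ hm),
              fun hm => this.2 (List.mem_cons_of_mem _ hm)⟩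
        · intro x τ hne
          have := hcln.2 x τ hne
          exact ⟨fun hm => this.1 (List.mem_cons_of_mem _ hm),
            fun hm => this.2 (List.mem_cons_of_mem _ hm)⟩

lemma no_reach_v (g₀ : Flo V) (n : ℕ) (hfl : IsFlow E lab s v g₀ n)
    (hmax : ∀ (m : ℕ) (g' : Flo V), IsFlow E lab s v g' m → m ≤ n) (hsv : s ≠ v) :
    ∀ τ, ¬ RR E lab s g₀ (v, τ) := by
  classical
  intro τ hRv
  obtain ⟨l, hch, hlast⟩ := List.exists_isChain_cons_of_relationReflTransGen hRv
  have hlast? : ∀ e ∈ (((s, 0) : V × ℕ) :: l).getLast?, (fun u : V × ℕ => u.1 = v) e := by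
    intro e he
    rw [List.getLast?_eq_getLast_of_ne_nil (by simp)] at he
    simp only [Option.mem_def, Option.some.injEq] at he
    rw [he] at hlast
    rw [hlast]
  obtain ⟨l₁, b, hch1, hQb, hsub1, hint⟩ :=
    chain_prefix_first (fun u : V × ℕ => u.1 = v) l ((s, 0) : V × ℕ) hch
      (by simpa using hsv) hlast?
  obtain ⟨l₂, hch2, hnd2, hlast2, hsub2⟩ :=
    chain_nodup (l₁ ++ [b]).length (l₁ ++ [b]) ((s, 0) : V × ℕ) le_rfl hch1
  have hglast : (((s, 0) : V × ℕ) :: l₂).getLast? = some b := by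
    rw [hlast2, show ((s, 0) : V × ℕ) :: (l₁ ++ [b]) = (((s, 0) : V × ℕ) :: l₁) ++ [b] by simp,
      List.getLast?_append_of_ne_nil _ (by simp)]
    rfl
  have hl₂ne : l₂ ≠ [] := by
    intro h; subst h
    simp only [List.getLast?_singleton, Option.some.injEq] at hglast
    exact hsv (by rw [show s = ((s, 0) : V × ℕ).1 from rfl, hglast, hQb])
  have hnodup_l₂ : l₂.Nodup := (List.nodup_cons.1 hnd2).2
  have hgl₂ : l₂.getLast? = some b := by
    rw [show ((s, 0) : V × ℕ) :: l₂ = [((s, 0) : V × ℕ)] ++ l₂ by simp,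
      List.getLast?_append_of_ne_nil _ hl₂ne] at hglast
    exact hglast
  have hdrop : ∀ u ∈ (((s, 0) : V × ℕ) :: l₂).dropLast, u.1 ≠ v := by
    obtain ⟨c, l₂', rfl⟩ := List.exists_cons_of_ne_nil hl₂ne
    intro u hu
    rw [List.dropLast_cons₂] at hu
    rcases List.mem_cons.1 hu with rfl | hu'
    · simpa using hsv
    · intro huv
      have hul₂ : u ∈ c :: l₂' := (List.dropLast_sublist (c :: l₂')).subset hu'
      have hub : u = b := by
        rcases List.mem_append.1 (hsub2 u hul₂) with h1 | h2
        · exact absurd huv (hint u h1)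
        · simpa using h2
      subst hub
      have hsplit : (c :: l₂').dropLast ++ [u] = c :: l₂' :=
        List.dropLast_append_getLast? u hgl₂
      have hnd3 : ((c :: l₂').dropLast ++ [u]).Nodup := by rw [hsplit]; exact hnodup_l₂
      exact (List.nodup_append.1 hnd3).2.2 u hu' u (by simp) rfl
  have haug0 : AugCons s v g₀ (n + 1) ((s, 0) : V × ℕ) := by
    intro z σ hz
    have hc0 := hfl.2 z σ hz
    by_cases hc : ((z, σ) : V × ℕ) = (s, 0)
    · rw [if_pos hc] at hc0 ⊢; rw [if_pos hc]; omega
    · rw [if_neg hc] at hc0 ⊢; rw [if_neg hc]; omega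
  have hcln0 : CleanOn g₀ g₀ l₂ := ⟨fun _ _ _ h => absurd rfl h, fun _ _ h => absurd rfl h⟩
  obtain ⟨g', hax', haug'⟩ := augment E lab s v g₀ hfl.1 (n + 1) l₂ ((s, 0) : V × ℕ) g₀
    hch2 hnd2 hdrop hfl.1 haug0 hcln0
  have haugb := haug' b (Option.mem_def.2 hglast)
  have hcons' : ConsK s v g' (n + 1) := by
    intro x τ' hx
    have hc1 := haugb x τ' hx
    rw [if_neg (fun hc => hx (by rw [show x = ((x, τ') : V × ℕ).1 from rfl, hc, hQb]))] at hc1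
    exact hc1
  exact absurd (hmax (n + 1) g' ⟨hax', hcons'⟩) (by omega)

/-! ### path extraction from a flow -/

lemma extract (K : ℕ) :
    ∀ (d : ℕ) (g : Flo V) (x₀ : V) (τ₀ : ℕ), Tb lab < τ₀ + d → x₀ ≠ v →
      Axioms E lab v g →
      (∀ z σ, z ≠ v → Out g z σ = Inn g z σ + (if (z, σ) = ((s, 0) : V × ℕ) then K else 0)
        + (if (z, σ) = ((x₀, τ₀) : V × ℕ) then 1 else 0)) →
      ∃ (l : List (V × V × ℕ)) (g' : Flo V),
        l ≠ [] ∧ List.Chain' (ChTE) l ∧ (∀ e ∈ l.head?, e.1 = x₀ ∧ τ₀ ≤ e.2.2) ∧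
        (∀ e ∈ l.getLast?, e.2.1 = v) ∧
        (∀ a ∈ l, (E a.1 a.2.1 ∧ a.2.2 ∈ lab a.1 a.2.1) ∧ g.f a.1 a.2.1 a.2.2 = 1
            ∧ g'.f a.1 a.2.1 a.2.2 = 0) ∧
        (∀ x y t, g'.f x y t ≤ g.f x y t) ∧ Axioms E lab v g' ∧ ConsK s v g' K := by
  intro d
  induction d with
  | zero =>
    intro g x₀ τ₀ hT hx hax hcons
    exfalso
    have h1 := hcons x₀ τ₀ hx
    have hO : Out g x₀ τ₀ = 0 := Out_zero_at_T E lab g hax.2.1 hax.2.2.2 x₀ τ₀ (by omega)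
    rw [if_pos rfl] at h1
    omega
  | succ d ih =>
    intro g x₀ τ₀ hT hx hax hcons
    obtain ⟨hcap, hsp, hva, hwb⟩ := hax
    have hO : 1 ≤ Out g x₀ τ₀ := by
      have := hcons x₀ τ₀ hx; rw [if_pos rfl] at this; omega
    by_cases hw : 1 ≤ g.w x₀ τ₀
    · have hcons2 : ∀ z σ, z ≠ v → Out (dropW g x₀ τ₀) z σ
          = Inn (dropW g x₀ τ₀) z σ + (if (z, σ) = ((s, 0) : V × ℕ) then K else 0)
          + (if (z, σ) = ((x₀, τ₀ + 1) : V × ℕ) then 1 else 0) := by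
        intro z σ hz
        have hOd := Out_dropW g x₀ τ₀ hw z σ
        have hId := Inn_dropW g x₀ τ₀ hw z σ
        have := hcons z σ hz
        omega
      have hax2 : Axioms E lab v (dropW g x₀ τ₀) := by
        refine ⟨hcap, hsp, ⟨hva.1, fun t => ?_⟩, fun x t ht => ?_⟩
        · show (if v = x₀ ∧ t = τ₀ then g.w v t - 1 else g.w v t) = 0
          split_ifs <;> simp [hva.2 t]
        · show (if x = x₀ ∧ t = τ₀ then g.w x t - 1 else g.w x t) = 0
          split_ifs <;> simp [hwb x t ht]
      obtain ⟨l, g', c1, c2, c3, c4, c5, c6, c7, c8⟩ :=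
        ih (dropW g x₀ τ₀) x₀ (τ₀ + 1) (by omega) hx hax2 hcons2
      refine ⟨l, g', c1, c2, ?_, c4, ?_, c6, c7, c8⟩
      · intro e he; have := c3 e he; exact ⟨this.1, by omega⟩
      · intro a ha; exact c5 a ha
    · have hsum : 1 ≤ ∑ y, g.f x₀ y τ₀ := by rw [Out] at hO; omega
      have hy : ∃ y, 1 ≤ g.f x₀ y τ₀ := by
        by_contra h; push_neg at h
        have : ∑ y, g.f x₀ y τ₀ = 0 := Finset.sum_eq_zero (fun y _ => by have := h y; omega)
        omega
      obtain ⟨y, hy1⟩ := hy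
      have hf1 : g.f x₀ y τ₀ = 1 := le_antisymm (hcap _ _ _) hy1
      have hval : E x₀ y ∧ τ₀ ∈ lab x₀ y := hsp x₀ y τ₀ (by omega)
      have hd0 : (dropF g x₀ y τ₀).f x₀ y τ₀ = 0 := by
        show (if x₀ = x₀ ∧ y = y ∧ τ₀ = τ₀ then g.f x₀ y τ₀ - 1 else _) = 0
        rw [if_pos ⟨rfl, rfl, rfl⟩, hf1]
      have hdle : ∀ x' y' t', (dropF g x₀ y τ₀).f x' y' t' ≤ g.f x' y' t' := by
        intro x' y' t'
        show (if _ then g.f x' y' t' - 1 else g.f x' y' t') ≤ g.f x' y' t'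
        split_ifs
        · exact Nat.sub_le _ _
        · exact le_refl _
      have hax2 : Axioms E lab v (dropF g x₀ y τ₀) := by
        refine ⟨fun x' y' t' => le_trans (hdle x' y' t') (hcap _ _ _), ?_, ⟨?_, hva.2⟩, hwb⟩
        · intro x' y' t' hne; apply hsp; intro h0
          apply hne
          show (if _ then g.f x' y' t' - 1 else _) = 0
          split_ifs <;> simp [h0]
        · intro y' t'
          show (if v = x₀ ∧ _ then g.f v y' t' - 1 else _) = 0
          split_ifs <;> simp [hva.1 y' t']
      by_cases hyv : y = v
      · subst hyv
        refine ⟨[(x₀, y, τ₀)], dropF g x₀ y τ₀, by simp, List.isChain_singleton _,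
          ?_, ?_, ?_, hdle, hax2, ?_⟩
        · intro e he; simp only [List.head?_cons, Option.mem_def, Option.some.injEq] at he
          subst he; exact ⟨rfl, le_refl τ₀⟩
        · intro e he; simp only [List.getLast?_singleton, Option.mem_def,
            Option.some.injEq] at he
          subst he; rfl
        · intro a ha; simp only [List.mem_singleton] at ha; subst ha
          exact ⟨hval, hf1, hd0⟩
        · intro z σ hz
          have hOd := Out_dropF g x₀ y τ₀ hy1 z σ
          have hId := Inn_dropF g x₀ y τ₀ hy1 z σ
          have hzn : (if ((z, σ) : V × ℕ) = (y, τ₀ + 1) then 1 else 0) = 0 :=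
            if_neg (fun hc => hz (congrArg Prod.fst hc))
          have := hcons z σ hz
          omega
      · have hT2 : τ₀ < Tb lab := lt_Tb hval.2
        have hcons2 : ∀ z σ, z ≠ v → Out (dropF g x₀ y τ₀) z σ
            = Inn (dropF g x₀ y τ₀) z σ + (if (z, σ) = ((s, 0) : V × ℕ) then K else 0)
            + (if (z, σ) = ((y, τ₀ + 1) : V × ℕ) then 1 else 0) := by
          intro z σ hz
          have hOd := Out_dropF g x₀ y τ₀ hy1 z σ
          have hId := Inn_dropF g x₀ y τ₀ hy1 z σ
          have := hcons z σ hz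
          omega
        obtain ⟨l, g', c1, c2, c3, c4, c5, c6, c7, c8⟩ :=
          ih (dropF g x₀ y τ₀) y (τ₀ + 1) (by omega) hyv hax2 hcons2
        have hrw : ((x₀, y, τ₀) :: l).getLast? = l.getLast? := by
          rw [show (x₀, y, τ₀) :: l = [(x₀, y, τ₀)] ++ l by simp,
            List.getLast?_append_of_ne_nil _ c1]
        refine ⟨(x₀, y, τ₀) :: l, g', by simp, ?_, ?_, ?_, ?_,
          fun x' y' t' => le_trans (c6 x' y' t') (hdle x' y' t'), c7, c8⟩
        · refine List.isChain_cons.2 ?_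
          exact ⟨fun e he => ⟨(c3 e he).1.symm,
            by have h9 := (c3 e he).2; show τ₀ < e.2.2; omega⟩, c2⟩
        · intro e he; simp only [List.head?_cons, Option.mem_def, Option.some.injEq] at he
          subst he; exact ⟨rfl, le_refl τ₀⟩
        · intro e he
          exact c4 e (by rwa [hrw] at he)
        · intro a ha
          rcases List.mem_cons.1 ha with rfl | ha'
          · refine ⟨hval, hf1, ?_⟩
            have h6 := c6 x₀ y τ₀
            rw [hd0] at h6
            show g'.f x₀ y τ₀ = 0
            omega
          · have hc5 := c5 a ha'
            refine ⟨hc5.1, ?_, hc5.2.2⟩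
            have h6 := hdle a.1 a.2.1 a.2.2
            have h7 := hcap a.1 a.2.1 a.2.2
            have h8 := hc5.2.1
            omega

lemma decomp : ∀ (K : ℕ) (g : Flo V), Axioms E lab v g → ConsK s v g K → s ≠ v →
    ∃ Js : Fin K → List (V × V × ℕ),
      (∀ i, GoodL E lab s v (Js i) ∧ ∀ a ∈ Js i, g.f a.1 a.2.1 a.2.2 = 1) ∧
      (∀ i j, i ≠ j → ∀ a, a ∈ Js i → a ∉ Js j) := by
  intro K
  induction K with
  | zero => intro g _ _ _; exact ⟨fun i => i.elim0, fun i => i.elim0, fun i => i.elim0⟩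
  | succ K ih =>
    intro g hax hcons hsv
    have hcons2 : ∀ z σ, z ≠ v → Out g z σ = Inn g z σ
        + (if (z, σ) = ((s, 0) : V × ℕ) then K else 0)
        + (if (z, σ) = ((s, 0) : V × ℕ) then 1 else 0) := by
      intro z σ hz
      have := hcons z σ hz
      by_cases hc : ((z, σ) : V × ℕ) = (s, 0)
      · rw [if_pos hc] at this; rw [if_pos hc, if_pos hc]; omega
      · rw [if_neg hc] at this; rw [if_neg hc, if_neg hc]; omega
    obtain ⟨l₀, g', c1, c2, c3, c4, c5, c6, c7, c8⟩ :=
      extract E lab s v K (Tb lab + 1) g s 0 (by omega) hsv hax hcons2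
    obtain ⟨Js', hJs1, hJs2⟩ := ih g' c7 c8 hsv
    refine ⟨Fin.cons l₀ Js', ?_, ?_⟩
    · intro i
      refine Fin.cases ?_ ?_ i
      · simp only [Fin.cons_zero]
        exact ⟨⟨c1, c2, fun e he => (c3 e he).1, c4, fun a ha => (c5 a ha).1⟩,
          fun a ha => (c5 a ha).2.1⟩
      · intro j; simp only [Fin.cons_succ]
        refine ⟨(hJs1 j).1, fun a ha => ?_⟩
        have h1 := (hJs1 j).2 a ha
        have h2 := c6 a.1 a.2.1 a.2.2
        have h3 := hax.1 a.1 a.2.1 a.2.2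
        omega
    · intro i j hij a hai haj
      rcases Fin.eq_zero_or_eq_succ i with rfl | ⟨i', rfl⟩ <;>
        rcases Fin.eq_zero_or_eq_succ j with rfl | ⟨j', rfl⟩
      · exact hij rfl
      · simp only [Fin.cons_zero, Fin.cons_succ] at hai haj
        have h0 := (c5 a hai).2.2
        have h1 := (hJs1 j').2 a haj
        omega
      · simp only [Fin.cons_zero, Fin.cons_succ] at hai haj
        have h0 := (c5 a haj).2.2
        have h1 := (hJs1 i').2 a hai
        omega
      · simp only [Fin.cons_succ] at hai haj
        exact hJs2 i' j' (fun h => hij (by rw [h])) a hai haj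

/-! ### final assembly helpers -/

def validTE (lab : V → V → Finset ℕ) : Finset (V × V × ℕ) :=
  Finset.univ.biUnion fun x => Finset.univ.biUnion fun y => (lab x y).image fun t => (x, y, t)

lemma mem_validTE (lab : V → V → Finset ℕ) {a : V × V × ℕ} :
    a ∈ validTE lab ↔ a.2.2 ∈ lab a.1 a.2.1 := by
  obtain ⟨x, y, t⟩ := a
  simp only [validTE, Finset.mem_biUnion, Finset.mem_univ, Finset.mem_image, true_and]
  constructor
  · rintro ⟨x', y', t', ht', heq⟩
    simp only [Prod.mk.injEq] at heq
    obtain ⟨rfl, rfl, rfl⟩ := heq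
    exact ht'
  · intro h
    exact ⟨x, y, t, h, rfl⟩

lemma len_pos (J : Journey E lab s v) (hsv : s ≠ v) : 0 < J.len := by
  by_contra h
  push_neg at h
  have h0 : J.len = 0 := by omega
  apply hsv
  have h1 : (0 : Fin (J.len + 1)) = Fin.last J.len := by
    apply Fin.ext; simp [h0]
  rw [← J.first, h1, J.last]

lemma journey_uses_cut (D : Finset (V × V × ℕ))
    (hcut : IsEmpty (Journey E (removeTimeEdges lab D) s v)) (J : Journey E lab s v) :
    ∃ p : Fin J.len, (J.vert p.castSucc, J.vert p.succ, J.lbl p) ∈ D := by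
  by_contra h
  push_neg at h
  exact hcut.false
    { len := J.len, vert := J.vert, lbl := J.lbl, first := J.first, last := J.last,
      edge := J.edge,
      mem := fun i => Finset.mem_filter.2 ⟨J.mem i, h i⟩,
      mono := J.mono }

lemma family_le (n : ℕ) (J : Fin n → Journey E lab s v)
    (hdisj : ∀ i j, i ≠ j → TimeEdgeDisjoint (J i) (J j)) (D : Finset (V × V × ℕ))
    (hD : ∀ i, ∃ p : Fin (J i).len,
      ((J i).vert p.castSucc, (J i).vert p.succ, (J i).lbl p) ∈ D) : n ≤ D.card := by
  choose p hp using hD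
  have hinj : Function.Injective (fun i =>
      (⟨((J i).vert (p i).castSucc, (J i).vert (p i).succ, (J i).lbl (p i)), hp i⟩
        : {a // a ∈ D})) := by
    intro i j hij
    by_contra hne
    have h0 := Subtype.ext_iff.1 hij
    simp only [Prod.mk.injEq] at h0
    exact hdisj i j hne (p i) (p j) h0.1 h0.2.1 h0.2.2
  have := Fintype.card_le_of_injective _ hinj
  simpa [Fintype.card_coe] using this

end TMenger

open TMenger in
/-- Menger's temporal analogue (time-edge disjoint version): the maximum number of
pairwise time-edge disjoint journeys from `s` to `v` equals the minimum number of
time-edges whose removal leaves no journey from `s` to `v`. -/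
theorem menger_temporal_time_edge_disjoint {V : Type*} [Fintype V] [DecidableEq V]
    (E : V → V → Prop) (lab : V → V → Finset ℕ) (s v : V) (hsv : s ≠ v) :
    ∃ M : ℕ,
      IsGreatest {n | ∃ J : Fin n → Journey E lab s v,
        ∀ i j, i ≠ j → TimeEdgeDisjoint (J i) (J j)} M ∧
      IsLeast {n | ∃ D : Finset (V × V × ℕ), D.card = n ∧
        IsEmpty (Journey E (removeTimeEdges lab D) s v)} M := by
  classical
  -- the set of sizes of disjoint families of journeys
  have hFam0 : 0 ∈ {n | ∃ J : Fin n → Journey E lab s v,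
      ∀ i j, i ≠ j → TimeEdgeDisjoint (J i) (J j)} := ⟨fun i => i.elim0, fun i => i.elim0⟩
  have hFamBdd : BddAbove {n | ∃ J : Fin n → Journey E lab s v,
      ∀ i j, i ≠ j → TimeEdgeDisjoint (J i) (J j)} := by
    refine ⟨(validTE lab).card, fun n hn => ?_⟩
    obtain ⟨J, hJ⟩ := hn
    exact family_le E lab s v n J hJ (validTE lab)
      (fun i => ⟨⟨0, len_pos E lab s v (J i) hsv⟩,
        (mem_validTE lab).2 ((J i).mem ⟨0, len_pos E lab s v (J i) hsv⟩)⟩)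
  obtain ⟨M, hMgr⟩ : ∃ M, IsGreatest {n | ∃ J : Fin n → Journey E lab s v,
      ∀ i j, i ≠ j → TimeEdgeDisjoint (J i) (J j)} M :=
    ⟨_, Nat.sSup_mem ⟨0, hFam0⟩ hFamBdd, fun n hn => le_csSup hFamBdd hn⟩
  have hMmem := hMgr.1
  -- maximum flow
  have hSF0 : (0 : ℕ) ∈ {n | ∃ g : Flo V, IsFlow E lab s v g n} := ⟨_, zero_flow E lab s v⟩
  have hSFB : BddAbove {n | ∃ g : Flo V, IsFlow E lab s v g n} := by
    refine ⟨(allU lab).card * (allU lab).card, fun n hn => ?_⟩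
    obtain ⟨g, hg⟩ := hn
    exact flow_bound E lab s v g n hg hsv
  obtain ⟨N, g₀, hg₀, hmaxflow⟩ : ∃ (N : ℕ) (g₀ : Flo V), IsFlow E lab s v g₀ N ∧
      (∀ (m : ℕ) (g' : Flo V), IsFlow E lab s v g' m → m ≤ N) := by
    obtain ⟨g₀, hg₀⟩ := Nat.sSup_mem ⟨0, hSF0⟩ hSFB
    exact ⟨_, g₀, hg₀, fun m g' h => le_csSup hSFB ⟨g', h⟩⟩
  have hA := no_reach_v E lab s v g₀ N hg₀ hmaxflow hsv
  -- N ≤ M via flow decomposition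
  obtain ⟨Js, hJs1, hJs2⟩ := decomp E lab s v N g₀ hg₀.1 hg₀.2 hsv
  have hNM : N ≤ M := by
    apply hMgr.2
    refine ⟨fun i => toJourney E lab s v (Js i) (hJs1 i).1, ?_⟩
    intro i j hij pi pj h1 h2 h3
    have ti := toJourney_triple E lab s v (Js i) (hJs1 i).1 pi
    have tj := toJourney_triple E lab s v (Js j) (hJs1 j).1 pj
    have heq : (Js i).get pi = (Js j).get pj := by rw [← ti, ← tj, h1, h2, h3]
    have hmi : (Js i).get pi ∈ Js i := List.get_mem _ _
    have hmj : (Js i).get pi ∈ Js j := by rw [heq]; exact List.get_mem _ _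
    exact hJs2 i j hij _ hmi hmj
  -- the cut coming from residual reachability
  obtain ⟨D, hD⟩ : ∃ D : Finset (V × V × ℕ), D = (validTE lab).filter
      (fun a => E a.1 a.2.1 ∧ RR E lab s g₀ (a.1, a.2.2) ∧ ¬ RR E lab s g₀ (a.2.1, a.2.2 + 1)) :=
    ⟨_, rfl⟩
  -- D is a cut
  have hcut : IsEmpty (Journey E (removeTimeEdges lab D) s v) := by
    constructor
    intro J
    have climb : ∀ (x : V) (k σ : ℕ), RR E lab s g₀ (x, σ) → σ + k < Tb lab + 1 →
        RR E lab s g₀ (x, σ + k) := by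
      intro x k
      induction k with
      | zero => intro σ h _; simpa using h
      | succ k ih =>
        intro σ h hb
        have hk : σ + k < Tb lab + 1 := by omega
        have hp := ih σ h hk
        have hw : σ + k < Tb lab := by omega
        exact Relation.ReflTransGen.tail hp (Or.inl ⟨rfl, rfl, hw⟩)
    have hsub : ∀ x y t, t ∈ removeTimeEdges lab D x y → t ∈ lab x y ∧ (x, y, t) ∉ D :=
      fun x y t ht => Finset.mem_filter.1 ht
    have crossstep : ∀ (i : Fin J.len) (σ : ℕ), RR E lab s g₀ (J.vert i.castSucc, σ) →
        σ ≤ J.lbl i → RR E lab s g₀ (J.vert i.succ, J.lbl i + 1) := by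
      intro i σ hPx hle
      have h5 := hsub _ _ _ (J.mem i)
      have hlab : J.lbl i ∈ lab (J.vert i.castSucc) (J.vert i.succ) := h5.1
      have hnD : (J.vert i.castSucc, J.vert i.succ, J.lbl i) ∉ D := h5.2
      have hE := J.edge i
      have hTb : J.lbl i < Tb lab := lt_Tb hlab
      have hPc : RR E lab s g₀ (J.vert i.castSucc, J.lbl i) := by
        have hb6 : σ + (J.lbl i - σ) < Tb lab + 1 := by omega
        have h6 := climb (J.vert i.castSucc) (J.lbl i - σ) σ hPx hb6
        have h7 : σ + (J.lbl i - σ) = J.lbl i := by omega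
        rwa [h7] at h6
      by_cases hf : g₀.f (J.vert i.castSucc) (J.vert i.succ) (J.lbl i) = 0
      · exact Relation.ReflTransGen.tail hPc (Or.inr (Or.inr (Or.inl ⟨rfl, hE, hlab, hf⟩)))
      · by_contra hPn
        apply hnD
        have hmm : (J.vert i.castSucc, J.vert i.succ, J.lbl i) ∈ (validTE lab).filter
            (fun a => E a.1 a.2.1 ∧ RR E lab s g₀ (a.1, a.2.2)
              ∧ ¬ RR E lab s g₀ (a.2.1, a.2.2 + 1)) :=
          Finset.mem_filter.2 ⟨(mem_validTE lab).2 hlab, hE, hPc, hPn⟩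
        rwa [← hD] at hmm
    have main : ∀ (i : ℕ) (h : i < J.len),
        RR E lab s g₀ (J.vert (⟨i, h⟩ : Fin J.len).succ, J.lbl ⟨i, h⟩ + 1) := by
      intro i
      induction i with
      | zero =>
        intro h
        apply crossstep ⟨0, h⟩ 0 ?_ (Nat.zero_le _)
        have h8 : (⟨0, h⟩ : Fin J.len).castSucc = (0 : Fin (J.len + 1)) := Fin.ext (by simp)
        rw [h8, J.first]
        exact Relation.ReflTransGen.refl
      | succ i ih =>
        intro h
        have hi : i < J.len := by omega
        have hp := ih hi
        apply crossstep ⟨i + 1, h⟩ (J.lbl ⟨i, hi⟩ + 1) hp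
        have hlt : (⟨i, hi⟩ : Fin J.len) < ⟨i + 1, h⟩ := by simp [Fin.lt_def]
        exact J.mono hlt
    have hlen : 0 < J.len := len_pos E (removeTimeEdges lab D) s v J hsv
    have hlen2 : J.len - 1 < J.len := by omega
    have hfin := main (J.len - 1) hlen2
    have h9 : (⟨J.len - 1, hlen2⟩ : Fin J.len).succ = Fin.last J.len := by
      apply Fin.ext
      simp [Fin.val_succ]
      omega
    rw [h9, J.last] at hfin
    exact hA _ hfin
  -- D.card ≤ N
  have hDcard : D.card ≤ N := by
    have hcr := cross E lab s v g₀ N hg₀.1 hg₀.2 (fun u => RR E lab s g₀ u)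
      Relation.ReflTransGen.refl hA
    have hzero : ∀ p ∈ ((allU lab).filter fun u => ¬ RR E lab s g₀ u) ×ˢ
        ((allU lab).filter fun u => RR E lab s g₀ u), garc g₀ p.1 p.2 = 0 := by
      intro p hp
      rw [Finset.mem_product] at hp
      have hb : ¬ RR E lab s g₀ p.1 := (Finset.mem_filter.1 hp.1).2
      have ha : RR E lab s g₀ p.2 := (Finset.mem_filter.1 hp.2).2
      rw [garc]
      by_cases hc : p.2.2 = p.1.2 + 1
      · have hf : g₀.f p.1.1 p.2.1 p.1.2 = 0 := by
          by_contra h0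
          have h1 : 1 ≤ g₀.f p.1.1 p.2.1 p.1.2 := by omega
          apply hb
          have hstep : rstep E lab g₀ p.2 (p.1.1, p.1.2) :=
            Or.inr (Or.inr (Or.inr ⟨hc, h1⟩))
          have := Relation.ReflTransGen.tail ha hstep
          rwa [Prod.mk.eta] at this
        have hwz : (if p.2.1 = p.1.1 then g₀.w p.1.1 p.1.2 else 0) = 0 := by
          split_ifs with he
          · by_contra h0
            have h1 : 1 ≤ g₀.w p.1.1 p.1.2 := by omega
            apply hb
            have hstep : rstep E lab g₀ p.2 (p.1.1, p.1.2) :=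
              Or.inr (Or.inl ⟨he.symm, hc, h1⟩)
            have := Relation.ReflTransGen.tail ha hstep
            rwa [Prod.mk.eta] at this
          · rfl
        rw [if_pos hc, hf, hwz]
      · rw [if_neg hc]
    have hsum0 : ∑ p ∈ ((allU lab).filter fun u => ¬ RR E lab s g₀ u) ×ˢ
        ((allU lab).filter fun u => RR E lab s g₀ u), garc g₀ p.1 p.2 = 0 :=
      Finset.sum_eq_zero hzero
    rw [hsum0, zero_add] at hcr
    have hmap : ∀ a ∈ D, (((a.1, a.2.2), (a.2.1, a.2.2 + 1)) : (V × ℕ) × (V × ℕ))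
        ∈ ((allU lab).filter fun u => RR E lab s g₀ u) ×ˢ
          ((allU lab).filter fun u => ¬ RR E lab s g₀ u)
        ∧ 1 ≤ garc g₀ (a.1, a.2.2) (a.2.1, a.2.2 + 1) := by
      intro a ha
      rw [hD, Finset.mem_filter] at ha
      obtain ⟨hvt, hEa, hPa, hPn⟩ := ha
      have hlab : a.2.2 ∈ lab a.1 a.2.1 := (mem_validTE lab).1 hvt
      have hTb := lt_Tb hlab
      have hf1 : g₀.f a.1 a.2.1 a.2.2 = 1 := by
        by_cases h0 : g₀.f a.1 a.2.1 a.2.2 = 0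
        · exfalso
          apply hPn
          exact Relation.ReflTransGen.tail hPa (Or.inr (Or.inr (Or.inl ⟨rfl, hEa, hlab, h0⟩)))
        · have := hg₀.1.1 a.1 a.2.1 a.2.2; omega
      have hr1 : a.2.2 < Tb lab + 1 := by omega
      have hr2 : a.2.2 + 1 < Tb lab + 1 := by omega
      refine ⟨Finset.mem_product.2 ⟨?_, ?_⟩, ?_⟩
      · refine Finset.mem_filter.2 ⟨?_, hPa⟩
        rw [allU]
        exact Finset.mem_product.2 ⟨Finset.mem_univ _, Finset.mem_range.2 hr1⟩
      · refine Finset.mem_filter.2 ⟨?_, hPn⟩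
        rw [allU]
        exact Finset.mem_product.2 ⟨Finset.mem_univ _, Finset.mem_range.2 hr2⟩
      · have hgeq : garc g₀ (a.1, a.2.2) (a.2.1, a.2.2 + 1)
            = g₀.f a.1 a.2.1 a.2.2 + (if a.2.1 = a.1 then g₀.w a.1 a.2.2 else 0) := by
          rw [garc, if_pos rfl]
        rw [hgeq, hf1]
        omega
    have hinj : Set.InjOn (fun a : V × V × ℕ =>
        (((a.1, a.2.2), (a.2.1, a.2.2 + 1)) : (V × ℕ) × (V × ℕ))) ↑D := by
      intro a _ b _ hab
      simp only [Prod.mk.injEq] at hab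
      obtain ⟨⟨h1, h2⟩, h3, _⟩ := hab
      exact Prod.ext h1 (Prod.ext h3 h2)
    have himg : D.image (fun a : V × V × ℕ =>
        (((a.1, a.2.2), (a.2.1, a.2.2 + 1)) : (V × ℕ) × (V × ℕ)))
        ⊆ ((allU lab).filter fun u => RR E lab s g₀ u) ×ˢ
          ((allU lab).filter fun u => ¬ RR E lab s g₀ u) := by
      intro q hq
      obtain ⟨a, ha, rfl⟩ := Finset.mem_image.1 hq
      exact (hmap a ha).1
    calc D.card
        = (D.image (fun a : V × V × ℕ =>
            (((a.1, a.2.2), (a.2.1, a.2.2 + 1)) : (V × ℕ) × (V × ℕ)))).card :=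
          (Finset.card_image_of_injOn hinj).symm
      _ ≤ ∑ q ∈ D.image (fun a : V × V × ℕ =>
            (((a.1, a.2.2), (a.2.1, a.2.2 + 1)) : (V × ℕ) × (V × ℕ))), garc g₀ q.1 q.2 := by
          have hns := Finset.card_nsmul_le_sum (D.image (fun a : V × V × ℕ =>
            (((a.1, a.2.2), (a.2.1, a.2.2 + 1)) : (V × ℕ) × (V × ℕ))))
            (fun q => garc g₀ q.1 q.2) 1 (fun q hq => by
              obtain ⟨a, ha, rfl⟩ := Finset.mem_image.1 hq
              exact (hmap a ha).2)
          simpa using hns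
      _ ≤ ∑ q ∈ ((allU lab).filter fun u => RR E lab s g₀ u) ×ˢ
            ((allU lab).filter fun u => ¬ RR E lab s g₀ u), garc g₀ q.1 q.2 :=
          Finset.sum_le_sum_of_subset himg
      _ = N := hcr
  -- put everything together
  obtain ⟨Jmax, hJmax⟩ := hMmem
  have hMD : M ≤ D.card := family_le E lab s v M Jmax hJmax D
    (fun i => journey_uses_cut E lab s v D hcut (Jmax i))
  have hDM : D.card = M := le_antisymm (le_trans hDcard hNM) hMD
  refine ⟨M, hMgr, ⟨D, hDM, hcut⟩, ?_⟩
  rintro m ⟨D', hD'card, hD'cut⟩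
  rw [← hD'card]
  exact family_le E lab s v M Jmax hJmax D'
    (fun i => journey_uses_cut E lab s v D' hD'cut (Jmax i))
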